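/- Let α > −1/2, 0 ≤ λ < α + 1/2, ν ≥ 0. Set ρ = sqrt(1 − (2λ/(2α+1))^2), γ = sqrt((2α−2λ+1)/(2α+2λ+1)), s_n = (2α+2λ+1)(n+ν+2α+1)/((2α+1)(2n+2ν+2α+2λ+1)), t_n = 1 − s_n. Define ψ_1 = ρ and ψ_{n+1} = (ρψ_n − t_n)/(s_n ψ_n) for n ≥ 1. Then ψ_n is well-defined and ψ_n ≥ γ (2λn + 2λν + 2α + 1)/(2λn + 2λν + 2α − 2λ + 1) for every n ≥ 1; in particular ψ_n ≥ γ for all n. -/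

import Mathlib

lemma assoc_pollaczek_step (a l m γ x : ℝ) (ha : 0 < a) (hl : 0 ≤ l) (hla : l < a) (hm : 1 ≤ m)
    (hγ : 0 < γ) (hγ2 : γ ^ 2 = (a - l) / (a + l))
    (hx : γ * (l * m + a) / (l * m + a - l) ≤ x) :
    γ * (l * m + l + a) / (l * m + a) ≤
      (γ * (a + l) / a * x - (a - l) * m / (a * (2 * m + a + l))) /
        ((a + l) * (m + a) / (a * (2 * m + a + l)) * x) := by
  have hD1 : 0 < l * m + a - l := by nlinarith
  have hD0 : 0 < l * m + a := by nlinarith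
  have hD2 : 0 < 2 * m + a + l := by nlinarith
  have hal : 0 < a + l := by linarith
  have hma : 0 < m + a := by linarith
  have hB : 0 < γ * (l * m + a) / (l * m + a - l) := by positivity
  have hx0 : 0 < x := lt_of_lt_of_le hB hx
  rw [le_div_iff₀ (by positivity)]
  set c := γ * (a + l) / a -
      γ * (l * m + l + a) / (l * m + a) * ((a + l) * (m + a) / (a * (2 * m + a + l))) with hc_def
  have hm0 : (0:ℝ) < m := lt_of_lt_of_le one_pos hm
  have hΔ : 0 < (2 * m + a + l) * (l * m + a) - (m + a) * (l * m + l + a) := by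
    nlinarith [mul_nonneg hl (mul_nonneg hm0.le (by linarith : (0:ℝ) ≤ m - 1)),
      mul_pos ha hm0, mul_nonneg (mul_nonneg hl hl) hm0.le]
  have hc_eq : c = γ * ((a + l) * ((2 * m + a + l) * (l * m + a) - (m + a) * (l * m + l + a)) /
      (a * (l * m + a) * (2 * m + a + l))) := by
    rw [hc_def]; field_simp
  have hc : 0 < c := by
    rw [hc_eq]
    exact mul_pos hγ (div_pos (mul_pos hal hΔ) (by positivity))
  have h1 : γ * (l * m + a) / (l * m + a - l) * c =
      γ ^ 2 * ((a + l) * ((2 * m + a + l) * (l * m + a) - (m + a) * (l * m + l + a)) /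
        (a * (l * m + a - l) * (2 * m + a + l))) := by
    rw [hc_def]; field_simp
  rw [hγ2] at h1
  have h2 : (a - l) / (a + l) * ((a + l) * ((2 * m + a + l) * (l * m + a) - (m + a) * (l * m + l + a)) /
        (a * (l * m + a - l) * (2 * m + a + l))) - (a - l) * m / (a * (2 * m + a + l)) =
      (a - l) * l ^ 2 * m / (a * (l * m + a - l) * (2 * m + a + l)) := by
    field_simp; ring
  have hkey : (a - l) * m / (a * (2 * m + a + l)) ≤ γ * (l * m + a) / (l * m + a - l) * c := by
    rw [h1]
    nlinarith [h2, div_nonneg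
      (mul_nonneg (mul_nonneg (by linarith : (0:ℝ) ≤ a - l) (sq_nonneg l)) hm0.le)
      (by positivity : (0:ℝ) ≤ a * (l * m + a - l) * (2 * m + a + l))]
  have hfin : (a - l) * m / (a * (2 * m + a + l)) ≤ x * c :=
    le_trans hkey (by nlinarith [mul_le_mul_of_nonneg_right hx hc.le])
  have hrw : x * c = γ * (a + l) / a * x -
      γ * (l * m + l + a) / (l * m + a) * ((a + l) * (m + a) / (a * (2 * m + a + l)) * x) := by
    rw [hc_def]; ring
  linarith [hfin, hrw.symm.le]

theorem assoc_pollaczek_psi_lower_bound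
    (α lam ν : ℝ) (hα : α > -(1/2)) (hlam0 : 0 ≤ lam) (hlam : lam < α + 1/2) (hν : ν ≥ 0)
    (ρ γ : ℝ) (s t ψ : ℕ → ℝ)
    (hρ : ρ = Real.sqrt (1 - (2 * lam / (2 * α + 1)) ^ 2))
    (hγ : γ = Real.sqrt ((2 * α - 2 * lam + 1) / (2 * α + 2 * lam + 1)))
    (hs : ∀ n : ℕ, 1 ≤ n →
      s n = (2 * α + 2 * lam + 1) * ((n : ℝ) + ν + 2 * α + 1) /
        ((2 * α + 1) * (2 * n + 2 * ν + 2 * α + 2 * lam + 1)))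
    (ht : ∀ n : ℕ, 1 ≤ n → t n = 1 - s n)
    (hψ1 : ψ 1 = ρ)
    (hψ : ∀ n : ℕ, 1 ≤ n → ψ (n + 1) = (ρ * ψ n - t n) / (s n * ψ n)) :
    ∀ n : ℕ, 1 ≤ n →
      ψ n ≥ γ * (2 * lam * n + 2 * lam * ν + 2 * α + 1) /
          (2 * lam * n + 2 * lam * ν + 2 * α - 2 * lam + 1) ∧
      ψ n ≥ γ := by
  have ha : (0:ℝ) < 2 * α + 1 := by linarith
  have hla : 2 * lam < 2 * α + 1 := by linarith
  have hal : (0:ℝ) < 2 * α + 2 * lam + 1 := by linarith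
  have hγpos : 0 < γ := by
    rw [hγ]; exact Real.sqrt_pos.2 (div_pos (by linarith) hal)
  have hγ2 : γ ^ 2 = (2 * α + 1 - 2 * lam) / (2 * α + 1 + 2 * lam) := by
    rw [hγ, Real.sq_sqrt (le_of_lt (div_pos (by linarith) hal))]
    ring_nf
  have hρeq : ρ = γ * (2 * α + 1 + 2 * lam) / (2 * α + 1) := by
    rw [hρ, hγ]
    have h1 : (1:ℝ) - (2 * lam / (2 * α + 1)) ^ 2 =
        ((2 * α - 2 * lam + 1) / (2 * α + 2 * lam + 1)) * ((2 * α + 1 + 2 * lam) / (2 * α + 1)) ^ 2 := by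
      have h3 : (2 * α + 1 + 2 * lam) = (2 * α + 2 * lam + 1) := by ring
      rw [h3]
      field_simp
      ring
    rw [h1, Real.sqrt_mul (le_of_lt (div_pos (by linarith) hal)),
      Real.sqrt_sq (by positivity)]
    ring
  -- main induction on the first bound
  have main : ∀ n : ℕ, 1 ≤ n →
      γ * (2 * lam * n + 2 * lam * ν + 2 * α + 1) /
        (2 * lam * n + 2 * lam * ν + 2 * α - 2 * lam + 1) ≤ ψ n := by
    intro n hn
    induction n, hn using Nat.le_induction with
    | base =>
      have hD : (0:ℝ) < 2 * lam * (1:ℕ) + 2 * lam * ν + 2 * α - 2 * lam + 1 := by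
        push_cast
        nlinarith [mul_nonneg hlam0 hν]
      rw [hψ1, hρeq, div_le_div_iff₀ hD (by positivity)]
      push_cast
      nlinarith [mul_nonneg (mul_nonneg hγpos.le (mul_nonneg hlam0 hlam0)) hν]
    | succ n hn ih =>
      have hn1 : (1:ℝ) ≤ (n:ℝ) := by exact_mod_cast hn
      have hm : (1:ℝ) ≤ (n:ℝ) + ν := by linarith
      have hDen : (0:ℝ) < (2 * α + 1) * (2 * n + 2 * ν + 2 * α + 2 * lam + 1) := by
        apply mul_pos ha; nlinarith
      have hseq : s n = ((2*α+1) + 2*lam) * (((n:ℝ) + ν) + (2*α+1)) /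
          ((2*α+1) * (2 * ((n:ℝ) + ν) + (2*α+1) + 2*lam)) := by
        rw [hs n hn]; congr 1 <;> ring
      have hteq : t n = ((2*α+1) - 2*lam) * ((n:ℝ) + ν) /
          ((2*α+1) * (2 * ((n:ℝ) + ν) + (2*α+1) + 2*lam)) := by
        rw [ht n hn, hs n hn]
        rw [eq_div_iff (by nlinarith : ((2*α+1) * (2 * ((n:ℝ) + ν) + (2*α+1) + 2*lam)) ≠ 0)]
        have h3 : (2 * ((n:ℝ) + ν) + (2*α+1) + 2*lam) = (2 * n + 2 * ν + 2 * α + 2 * lam + 1) := by ring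
        have hB : (2 * α + 1) * (2 * (n:ℝ) + 2 * ν + 2 * α + 2 * lam + 1) ≠ 0 := by nlinarith
        rw [h3, one_sub_div hB, div_mul_cancel₀ _ hB]
        ring
      have hx : γ * (2*lam * ((n:ℝ) + ν) + (2*α+1)) / (2*lam * ((n:ℝ) + ν) + (2*α+1) - 2*lam) ≤ ψ n := by
        refine le_trans (le_of_eq ?_) ih
        congr 1 <;> ring
      have hstep := assoc_pollaczek_step (2*α+1) (2*lam) ((n:ℝ) + ν) γ (ψ n)
        ha (by linarith) hla hm hγpos (by rw [hγ2]) hx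
      rw [hψ n hn, hseq, hteq, hρeq]
      refine le_trans (le_of_eq ?_) hstep
      push_cast
      congr 1 <;> ring
  intro n hn
  have hn1 : (1:ℝ) ≤ (n:ℝ) := by exact_mod_cast hn
  have hD : (0:ℝ) < 2 * lam * n + 2 * lam * ν + 2 * α - 2 * lam + 1 := by
    nlinarith [mul_nonneg hlam0 hν, mul_nonneg hlam0 (by linarith : (0:ℝ) ≤ (n:ℝ) - 1)]
  refine ⟨main n hn, le_trans ?_ (main n hn)⟩
  rw [le_div_iff₀ hD]
  nlinarith [mul_nonneg hγpos.le hlam0]
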